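/- Let d ≥ 2 and 1 ≤ p < d, let λ : ℝ^d → ℝ be continuous and 2πℤ^d-periodic, and let T be a primitive integer p×d matrix. Then λ(S_T ∩ (−π,π]^d) = λ(S_T) = λ({k ∈ ℝ^d : T k = 0}), and this common image is a closed bounded interval: there exist real numbers a ≤ b with λ(S_T ∩ (−π,π]^d) = [a, b]. In particular the infimum and the supremum of λ over S_T are attained at points of S_T ∩ (−π,π]^d. -/

import Mathlib

open Matrix
open scoped Real BigOperators

/-- Euclidean norm of a vector in `ℝ^n`. -/
noncomputable def euclNorm {n : ℕ} (x : Fin n → ℝ) : ℝ := Real.sqrt (∑ i, (x i)^2)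

open scoped Classical in
/-- Smallest eigenvalue of a (Hermitian) real matrix. -/
noncomputable def matLamMin {n : ℕ} (A : Matrix (Fin n) (Fin n) ℝ) : ℝ :=
  if h : A.IsHermitian then ⨅ i, h.eigenvalues i else 0

/-- `τ(T)`: square root of the smallest eigenvalue of `T * Tᵀ`. -/
noncomputable def matTau {p d : ℕ} (T : Matrix (Fin p) (Fin d) ℝ) : ℝ :=
  Real.sqrt (matLamMin (T * Tᵀ))

open scoped Classical in
/-- `A^{-1/2}`: the inverse of the positive (semi)definite square root of `A`. -/
noncomputable def matInvSqrt {n : ℕ} (A : Matrix (Fin n) (Fin n) ℝ) : Matrix (Fin n) (Fin n) ℝ :=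
  if h : A.PosSemidef then
    ((h.1.eigenvectorUnitary : Matrix (Fin n) (Fin n) ℝ) *
      diagonal ((↑) ∘ Real.sqrt ∘ h.1.eigenvalues) *
      (star h.1.eigenvectorUnitary : Matrix (Fin n) (Fin n) ℝ))⁻¹ else 0

/-- The representative of `x` in `(-π, π]` modulo `2πℤ`. -/
noncomputable def repPi (x : ℝ) : ℝ := x - 2*Real.pi*(⌈(x - Real.pi)/(2*Real.pi)⌉ : ℤ)

lemma isClosed_twoPiInt : IsClosed {x : ℝ | ∃ n : ℤ, x = 2*π*n} := by
  have h2 : (2*π) ≠ 0 := by positivity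
  have hrw : {x : ℝ | ∃ n : ℤ, x = 2*π*n}
      = (fun x : ℝ => x / (2*π)) ⁻¹' (Set.range (Int.cast : ℤ → ℝ)) := by
    ext x
    simp only [Set.mem_setOf_eq, Set.mem_preimage, Set.mem_range]
    constructor
    · rintro ⟨n, rfl⟩; exact ⟨n, by field_simp⟩
    · rintro ⟨n, hn⟩; exact ⟨n, by field_simp at hn; linarith⟩
  rw [hrw]
  exact Int.isClosedEmbedding_coe_real.isClosed_range.preimage (continuous_id.div_const _)

/-- for a continuous `2πℤ^d`-periodic `λ` and a primitive integer matrix `T`,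
the images of `S_T ∩ (−π,π]^d`, of `S_T`, and of `ker T` under `λ` coincide, and this
common image is a closed interval `[a,b]`; in particular the extrema of `λ` over `S_T`
are attained on `S_T ∩ (−π,π]^d`. -/
theorem stmt_3 (d p : ℕ) (hd : 2 ≤ d) (hp : 1 ≤ p) (hpd : p < d)
    (lam : (Fin d → ℝ) → ℝ) (hcont : Continuous lam)
    (hper : ∀ (k : Fin d → ℝ) (n : Fin d → ℤ), lam (k + fun i => 2*π*(n i : ℝ)) = lam k)
    (T : Matrix (Fin p) (Fin d) ℤ)
    (hprim : ∃ S : Matrix (Fin d) (Fin p) ℤ, T * S = 1) :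
    lam '' ({k | ∀ i, ∃ n : ℤ, (T.map (Int.cast : ℤ → ℝ) *ᵥ k) i = 2*π*n} ∩
        {k | ∀ i, k i ∈ Set.Ioc (-π) π})
      = lam '' {k | ∀ i, ∃ n : ℤ, (T.map (Int.cast : ℤ → ℝ) *ᵥ k) i = 2*π*n} ∧
    lam '' {k | ∀ i, ∃ n : ℤ, (T.map (Int.cast : ℤ → ℝ) *ᵥ k) i = 2*π*n}
      = lam '' {k | T.map (Int.cast : ℤ → ℝ) *ᵥ k = 0} ∧
    (∃ a b : ℝ, a ≤ b ∧
      lam '' ({k | ∀ i, ∃ n : ℤ, (T.map (Int.cast : ℤ → ℝ) *ᵥ k) i = 2*π*n} ∩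
        {k | ∀ i, k i ∈ Set.Ioc (-π) π}) = Set.Icc a b) ∧
    (∃ kmin ∈ ({k | ∀ i, ∃ n : ℤ, (T.map (Int.cast : ℤ → ℝ) *ᵥ k) i = 2*π*n} ∩
        {k | ∀ i, k i ∈ Set.Ioc (-π) π} : Set (Fin d → ℝ)),
      ∀ k ∈ {k : Fin d → ℝ | ∀ i, ∃ n : ℤ, (T.map (Int.cast : ℤ → ℝ) *ᵥ k) i = 2*π*n},
        lam kmin ≤ lam k) ∧
    (∃ kmax ∈ ({k | ∀ i, ∃ n : ℤ, (T.map (Int.cast : ℤ → ℝ) *ᵥ k) i = 2*π*n} ∩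
        {k | ∀ i, k i ∈ Set.Ioc (-π) π} : Set (Fin d → ℝ)),
      ∀ k ∈ {k : Fin d → ℝ | ∀ i, ∃ n : ℤ, (T.map (Int.cast : ℤ → ℝ) *ᵥ k) i = 2*π*n},
        lam k ≤ lam kmax) := by
  obtain ⟨Sm, hSm⟩ := hprim
  set A := T.map (Int.cast : ℤ → ℝ) with hA
  set S : Set (Fin d → ℝ) := {k | ∀ i, ∃ n : ℤ, (A *ᵥ k) i = 2*π*n} with hSdef
  set Box : Set (Fin d → ℝ) := {k | ∀ i, k i ∈ Set.Ioc (-π) π} with hBoxdef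
  set K : Set (Fin d → ℝ) := {k | A *ᵥ k = 0} with hKdef
  have hpi := Real.pi_pos
  have h2pi : (0:ℝ) < 2*π := by positivity
  have hw : ∀ (n : Fin d → ℤ) (i : Fin p),
      (A *ᵥ fun j => 2*π*(n j : ℝ)) i = 2*π*((T *ᵥ n) i : ℝ) := by
    intro n i
    simp only [hA, Matrix.mulVec, dotProduct, Matrix.map_apply]
    push_cast
    rw [Finset.mul_sum]
    exact Finset.sum_congr rfl fun j _ => by ring
  have hshift : ∀ k ∈ S, ∀ n : Fin d → ℤ,
      (k - fun i => 2*π*(n i : ℝ)) ∈ S ∧ lam (k - fun i => 2*π*(n i : ℝ)) = lam k := by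
    intro k hk n
    constructor
    · intro i
      obtain ⟨m, hm⟩ := hk i
      refine ⟨m - (T *ᵥ n) i, ?_⟩
      rw [Matrix.mulVec_sub]
      simp only [Pi.sub_apply, hm, hw n i]
      push_cast; ring
    · have heq : (k - fun i => 2*π*(n i : ℝ)) + (fun i => 2*π*(n i : ℝ)) = k := by
        funext i; simp
      rw [← hper (k - fun i => 2*π*(n i : ℝ)) n, heq]
  have hKS : K ⊆ S := by
    intro k hk i
    refine ⟨0, ?_⟩
    rw [Set.mem_setOf_eq] at hk
    rw [hk]; simp
  have h1 : lam '' (S ∩ Box) = lam '' S := by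
    refine Set.Subset.antisymm (Set.image_mono Set.inter_subset_left) ?_
    rintro _ ⟨k, hk, rfl⟩
    set n : Fin d → ℤ := fun i => ⌈(k i - π)/(2*π)⌉ with hn
    obtain ⟨hS', hlam⟩ := hshift k hk n
    refine ⟨_, ⟨hS', ?_⟩, hlam⟩
    intro i
    have hc1 : (k i - π)/(2*π) ≤ ((n i : ℤ) : ℝ) := Int.le_ceil _
    have hc2 : ((n i : ℤ) : ℝ) < (k i - π)/(2*π) + 1 := Int.ceil_lt_add_one _
    have he : (k i - π)/(2*π)*(2*π) = k i - π := div_mul_cancel₀ _ (ne_of_gt h2pi)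
    have hb1 := mul_le_mul_of_nonneg_right hc1 h2pi.le
    have hb2 := mul_lt_mul_of_pos_right hc2 h2pi
    rw [he] at hb1
    constructor
    · show -π < k i - 2*π*(n i : ℝ)
      nlinarith
    · show k i - 2*π*(n i : ℝ) ≤ π
      nlinarith
  have h2 : lam '' S = lam '' K := by
    refine Set.Subset.antisymm ?_ (Set.image_mono hKS)
    rintro _ ⟨k, hk, rfl⟩
    have hk2 := hk
    choose m hm using hk2
    set n : Fin d → ℤ := Sm *ᵥ m with hn
    obtain ⟨_, hlam⟩ := hshift k hk n
    have hTn : T *ᵥ n = m := by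
      rw [hn, Matrix.mulVec_mulVec, hSm, Matrix.one_mulVec]
    refine ⟨_, ?_, hlam⟩
    show A *ᵥ (k - fun i => 2*π*(n i : ℝ)) = 0
    funext i
    rw [Matrix.mulVec_sub]
    simp only [Pi.sub_apply, hm, hw n i, hTn, Pi.zero_apply]
    ring
  set C : Set (Fin d → ℝ) := Set.pi Set.univ (fun _ => Set.Icc (-π) π) with hC
  have hBC : Box ⊆ C := by
    intro k hk i _
    exact Set.Ioc_subset_Icc_self (hk i)
  have hcontA : ∀ i, Continuous fun k : Fin d → ℝ => (A *ᵥ k) i := by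
    intro i
    simp only [Matrix.mulVec, dotProduct]
    exact continuous_finset_sum _ fun j _ => continuous_const.mul (continuous_apply j)
  have hSclosed : IsClosed S := by
    have hrw : S = ⋂ i, (fun k : Fin d → ℝ => (A *ᵥ k) i) ⁻¹' {x : ℝ | ∃ n : ℤ, x = 2*π*n} := by
      ext k
      simp only [hSdef, Set.mem_setOf_eq, Set.mem_iInter, Set.mem_preimage]
    rw [hrw]
    exact isClosed_iInter fun i => IsClosed.preimage (hcontA i) isClosed_twoPiInt
  have hSC : IsCompact (S ∩ C) :=
    (isCompact_univ_pi fun _ => isCompact_Icc).inter_left hSclosed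
  have h3 : lam '' (S ∩ Box) = lam '' (S ∩ C) := by
    refine Set.Subset.antisymm
      (Set.image_mono (Set.inter_subset_inter_right _ hBC)) ?_
    calc lam '' (S ∩ C) ⊆ lam '' S := Set.image_mono Set.inter_subset_left
    _ = lam '' (S ∩ Box) := h1.symm
  have hKconv : Convex ℝ K := by
    intro x hx y hy a b ha hb hab
    show A *ᵥ (a • x + b • y) = 0
    rw [Set.mem_setOf_eq] at hx hy
    rw [Matrix.mulVec_add, Matrix.mulVec_smul, Matrix.mulVec_smul, hx, hy]
    simp
  have hzero : (0 : Fin d → ℝ) ∈ S ∩ Box := by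
    constructor
    · intro i; exact ⟨0, by simp⟩
    · intro i
      constructor
      · show -π < (0:ℝ); linarith
      · show (0:ℝ) ≤ π; linarith
  set I := lam '' (S ∩ Box) with hI
  have h4 : I = lam '' K := h1.trans h2
  have hIcomp : IsCompact I := by
    rw [h3]; exact hSC.image hcont
  have hIconn : IsPreconnected I := by
    rw [h4]
    exact hKconv.isPreconnected.image lam hcont.continuousOn
  have hIne : I.Nonempty := ⟨lam 0, 0, hzero, rfl⟩
  have hIcc := eq_Icc_of_connected_compact ⟨hIne, hIconn⟩ hIcomp
  have hab : sInf I ≤ sSup I := by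
    obtain ⟨x, hx⟩ := hIne
    rw [hIcc] at hx
    exact le_trans hx.1 hx.2
  have haI : sInf I ∈ Set.Icc (sInf I) (sSup I) := ⟨le_refl _, hab⟩
  have hbI : sSup I ∈ Set.Icc (sInf I) (sSup I) := ⟨hab, le_refl _⟩
  rw [← hIcc] at haI hbI
  rw [hI, Set.mem_image] at haI hbI
  obtain ⟨kmin, hkmin, hkmineq⟩ := haI
  obtain ⟨kmax, hkmax, hkmaxeq⟩ := hbI
  have hbound : ∀ k ∈ S, lam k ∈ Set.Icc (sInf I) (sSup I) := by
    intro k hk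
    rw [← hIcc, h1]
    exact ⟨k, hk, rfl⟩
  refine ⟨h1, h2, ⟨sInf I, sSup I, hab, hIcc⟩,
    ⟨kmin, hkmin, fun k hk => ?_⟩, ⟨kmax, hkmax, fun k hk => ?_⟩⟩
  · rw [hkmineq]; exact (hbound k hk).1
  · rw [hkmaxeq]; exact (hbound k hk).2
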